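/- Let F ∈ T^{∞,2} and G ∈ T^{1,2}. Then ∫_{ℝ₊^{n+1}} |F||G| dy dt ≤ C ∫_{ℝⁿ} 𝒞₂(F)(x) S(G)(x) dx, where 𝒞₂(F)(x) = (sup_{B ∋ x} (1/|B|) ∫_{B̂} |F|² dy dt)^{1/2} and S(G) is the parabolic square function. Consequently T^{∞,2} embeds into the dual of T^{1,2}. -/

import Mathlib

open MeasureTheory Metric
open scoped ENNReal NNReal

/-- The parabolic tent over the ball `B(c,r)`. -/
def tentBall (n : ℕ) (c : EuclideanSpace ℝ (Fin n)) (r : ℝ) :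
    Set (ℝ × EuclideanSpace ℝ (Fin n)) :=
  {z | 0 < z.1 ∧ Real.sqrt z.1 ≤ infDist z.2 (ball c r)ᶜ}

/-- The parabolic square function. -/
noncomputable def sqFn (n : ℕ) (G : ℝ × EuclideanSpace ℝ (Fin n) → ℂ)
    (x : EuclideanSpace ℝ (Fin n)) : ℝ≥0∞ :=
  (∫⁻ z in {z : ℝ × EuclideanSpace ℝ (Fin n) |
      0 < z.1 ∧ z.2 ∈ ball x (Real.sqrt z.1)},
    ENNReal.ofReal (‖G z‖ ^ 2 / z.1 ^ ((n:ℝ)/2))) ^ (1/2 : ℝ)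

/-- `𝒞₂(F)(x) = ( sup_{B ∋ x} |B|⁻¹ ∫_{B̂} |F|² )^{1/2}`. -/
noncomputable def carl2 (n : ℕ) (F : ℝ × EuclideanSpace ℝ (Fin n) → ℂ)
    (x : EuclideanSpace ℝ (Fin n)) : ℝ≥0∞ :=
  (⨆ (c : EuclideanSpace ℝ (Fin n)) (r : ℝ) (_ : 0 < r) (_ : x ∈ ball c r),
    (volume (ball c r))⁻¹ * ∫⁻ z in tentBall n c r, ENNReal.ofReal (‖F z‖ ^ 2)) ^ (1/2 : ℝ)

namespace CarlDualAux

open Set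

abbrev Esp (n : ℕ) := EuclideanSpace ℝ (Fin n)
abbrev Zsp (n : ℕ) := ℝ × Esp n

variable {n : ℕ}

noncomputable def uvec (n : ℕ) (hn : 1 ≤ n) : Esp n :=
  EuclideanSpace.single ⟨0, hn⟩ (1:ℝ)

lemma norm_uvec {n} (hn : 1 ≤ n) : ‖uvec n hn‖ = 1 := by
  simp [uvec, EuclideanSpace.norm_single]

lemma nontrivial_esp {n} (hn : 1 ≤ n) : Nontrivial (Esp n) := by
  refine ⟨0, uvec n hn, ?_⟩
  intro h
  have := norm_uvec hn
  rw [← h] at this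
  simp at this

noncomputable def vball (n : ℕ) : ℝ≥0∞ := volume (ball (0 : Esp n) 1)

lemma vball_pos {n} (hn : 1 ≤ n) : 0 < vball n :=
  measure_ball_pos volume _ one_pos

lemma vball_ne_top {n} : vball n ≠ ∞ := measure_ball_lt_top.ne

lemma vol_ball {n} (hn : 1 ≤ n) (c : Esp n) {r : ℝ} (hr : 0 ≤ r) :
    volume (ball c r) = ENNReal.ofReal (r ^ n) * vball n := by
  haveI := nontrivial_esp hn
  rw [MeasureTheory.Measure.addHaar_ball volume c hr, finrank_euclideanSpace_fin]
  rfl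

lemma sqhalf (x : ℝ≥0∞) : x ^ (1/2:ℝ) * x ^ (1/2:ℝ) = x := by
  rcases eq_or_ne x 0 with rfl | hx
  · rw [ENNReal.zero_rpow_of_pos (by norm_num)]; simp
  rcases eq_or_ne x ⊤ with rfl | hx'
  · rw [ENNReal.top_rpow_of_pos (by norm_num)]; simp
  rw [← ENNReal.rpow_add _ _ hx hx']
  norm_num

lemma ratio1 (q S : ℝ≥0∞) : q * (S / q ^ (1/2:ℝ)) ≤ q ^ (1/2:ℝ) * S := by
  rcases eq_or_ne q 0 with rfl | hq
  · simp
  rcases eq_or_ne q ⊤ with rfl | hq'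
  · rw [ENNReal.top_rpow_of_pos (by norm_num)]
    simp [ENNReal.div_top]
  have h1 : q ^ (1/2:ℝ) ≠ 0 := by
    simp [ENNReal.rpow_eq_zero_iff, hq, hq']
  have h2 : q ^ (1/2:ℝ) ≠ ⊤ := by
    simp [ENNReal.rpow_eq_top_iff, hq, hq']
  refine le_of_eq ?_
  calc q * (S / q ^ (1/2:ℝ)) = q ^ (1/2:ℝ) * q ^ (1/2:ℝ) * (S * (q ^ (1/2:ℝ))⁻¹) := by
        rw [sqhalf, div_eq_mul_inv]
    _ = q ^ (1/2:ℝ) * S * (q ^ (1/2:ℝ) * (q ^ (1/2:ℝ))⁻¹) := by ring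
    _ = q ^ (1/2:ℝ) * S := by rw [ENNReal.mul_inv_cancel h1 h2, mul_one]

lemma ratio2 (a S : ℝ≥0∞) : (S / a)⁻¹ * (S * S) ≤ a * S := by
  rcases eq_or_ne S 0 with rfl | hS
  · simp
  rcases eq_or_ne a ⊤ with rfl | ha'
  · have : (⊤:ℝ≥0∞) * S = ⊤ := by simp [hS]
    simp [this]
  rcases eq_or_ne a 0 with rfl | ha
  · have : S / (0:ℝ≥0∞) = ⊤ := by
      simp [ENNReal.div_zero hS]
    simp [this]
  rcases eq_or_ne S ⊤ with rfl | hS'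
  · have : (⊤:ℝ≥0∞) / a = ⊤ := ENNReal.top_div_of_ne_top ha'
    simp [this]
  have : (S / a)⁻¹ = a / S := ENNReal.inv_div (Or.inl ha') (Or.inl ha)
  rw [this, div_eq_mul_inv]
  refine le_of_eq ?_
  calc a * S⁻¹ * (S * S) = a * S * (S⁻¹ * S) := by ring
    _ = a * S := by rw [ENNReal.inv_mul_cancel hS hS', mul_one]

lemma layercake (a : ℝ≥0∞) :
    (volume {l : ℝ | 0 < l ∧ ENNReal.ofReal l < a}) = a := by
  rcases eq_or_ne a ⊤ with rfl | ha
  · have : {l : ℝ | 0 < l ∧ ENNReal.ofReal l < ⊤} = Ioi 0 := by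
      ext l; simp [ENNReal.ofReal_lt_top, mem_Ioi]
    rw [this, Real.volume_Ioi]
  · have : {l : ℝ | 0 < l ∧ ENNReal.ofReal l < a} = Ioo 0 a.toReal := by
      ext l
      simp only [mem_setOf_eq, mem_Ioo]
      constructor
      · rintro ⟨h1, h2⟩
        exact ⟨h1, (ENNReal.ofReal_lt_iff_lt_toReal h1.le ha).mp h2⟩
      · rintro ⟨h1, h2⟩
        exact ⟨h1, (ENNReal.ofReal_lt_iff_lt_toReal h1.le ha).mpr h2⟩
    rw [this, Real.volume_Ioo, sub_zero, ENNReal.ofReal_toReal ha]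

lemma amgm {x y : ℝ} (hx : 0 ≤ x) (hy : 0 ≤ y) (m : ℝ≥0∞) :
    ENNReal.ofReal (x * y) ≤
      2⁻¹ * (ENNReal.ofReal (x ^ 2) * m + ENNReal.ofReal (y ^ 2) * m⁻¹) := by
  rcases eq_or_ne m 0 with rfl | hm
  · rcases eq_or_ne y 0 with rfl | hy0
    · simp
    · have : ENNReal.ofReal (y ^ 2) * (0:ℝ≥0∞)⁻¹ = ⊤ := by
        rw [ENNReal.inv_zero, ENNReal.mul_top]
        simp [ENNReal.ofReal_pos, pow_pos (lt_of_le_of_ne hy (Ne.symm hy0)), hy0]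
      rw [this]
      simp [ENNReal.mul_top]
  rcases eq_or_ne m ⊤ with rfl | hm'
  · rcases eq_or_ne x 0 with rfl | hx0
    · simp
    · have : ENNReal.ofReal (x ^ 2) * (⊤:ℝ≥0∞) = ⊤ := by
        rw [ENNReal.mul_top]
        simp [ENNReal.ofReal_pos, pow_pos (lt_of_le_of_ne hx (Ne.symm hx0)), hx0]
      rw [this]
      simp [ENNReal.mul_top]
  · set a := m.toReal with hadef
    have ha : 0 < a := ENNReal.toReal_pos hm hm'
    have hma : m = ENNReal.ofReal a := by rw [hadef, ENNReal.ofReal_toReal hm']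
    have hminv : m⁻¹ = ENNReal.ofReal a⁻¹ := by
      rw [hma, ENNReal.ofReal_inv_of_pos ha]
    rw [hminv, hma, ← ENNReal.ofReal_mul (by positivity), ← ENNReal.ofReal_mul (by positivity),
      ← ENNReal.ofReal_add (by positivity) (by positivity)]
    have h2 : (2:ℝ≥0∞)⁻¹ = ENNReal.ofReal 2⁻¹ := by
      rw [ENNReal.ofReal_inv_of_pos (by norm_num)]
      norm_num
    rw [h2, ← ENNReal.ofReal_mul (by norm_num)]
    apply ENNReal.ofReal_le_ofReal
    have key : 2 * (x * y) * a ≤ (x^2 * a + y^2 * a⁻¹) * a := by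
      have hinv : a⁻¹ * a = 1 := inv_mul_cancel₀ ha.ne'
      nlinarith [sq_nonneg (x * a - y)]
    calc x * y = 2⁻¹ * (2 * (x*y)) := by ring
      _ ≤ 2⁻¹ * (x^2*a + y^2*a⁻¹) := by
          apply mul_le_mul_of_nonneg_left _ (by norm_num)
          exact le_of_mul_le_mul_right (by linarith [key]) ha

lemma mem_tentBall {n} (hn : 1 ≤ n) {c y : Esp n} {t r : ℝ} :
    (t, y) ∈ tentBall n c r ↔ 0 < t ∧ dist y c + Real.sqrt t ≤ r := by
  classical
  constructor
  · rintro ⟨ht, hle⟩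
    simp only at ht hle
    refine ⟨ht, ?_⟩
    have hst : 0 < Real.sqrt t := Real.sqrt_pos.mpr ht
    -- y must be in the ball
    have hyb : y ∈ ball c r := by
      by_contra hyb
      rw [infDist_zero_of_mem (Set.mem_compl hyb)] at hle
      linarith
    have hd : dist y c < r := mem_ball.mp hyb
    have hr : 0 < r := lt_of_le_of_lt dist_nonneg hd
    -- construct the witness point on the sphere
    set u : Esp n := if h : y = c then uvec n hn else ‖y - c‖⁻¹ • (y - c) with hu
    have hnu : ‖u‖ = 1 := by
      rw [hu]
      split_ifs with h
      · exact norm_uvec hn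
      · rw [norm_smul, norm_inv, Real.norm_eq_abs, abs_of_nonneg (norm_nonneg _),
          inv_mul_cancel₀ (by simpa [sub_eq_zero] using h)]
    set w : Esp n := c + r • u with hw
    have hwc : dist w c = r := by
      rw [hw, dist_eq_norm, add_sub_cancel_left, norm_smul, hnu, Real.norm_eq_abs,
        abs_of_pos hr, mul_one]
    have hwnot : w ∈ (ball c r)ᶜ := by
      simp [mem_ball, hwc]
    have hyw : dist y w = r - dist y c := by
      rcases eq_or_ne y c with rfl | h
      · rw [dist_comm y w, hwc]
        simp
      · have hyc : y - c = ‖y - c‖ • u := by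
          rw [hu, dif_neg h, smul_smul, mul_inv_cancel₀ (by simpa [sub_eq_zero] using h), one_smul]
        have hsub : y - w = (‖y - c‖ - r) • u := by
          rw [hw, sub_smul, ← hyc]
          abel
        have hnn : ‖y - c‖ - r ≤ 0 := by
          rw [← dist_eq_norm]; linarith
        rw [dist_eq_norm, hsub, norm_smul, hnu, mul_one, Real.norm_eq_abs,
          abs_of_nonpos hnn, dist_eq_norm]
        ring
    have : Real.sqrt t ≤ r - dist y c := le_trans hle (by
      rw [← hyw]; exact infDist_le_dist_of_mem hwnot)
    linarith
  · rintro ⟨ht, hle⟩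
    have hst : 0 < Real.sqrt t := Real.sqrt_pos.mpr ht
    have hr : 0 < r := by
      have := dist_nonneg (x := y) (y := c); linarith
    refine ⟨ht, ?_⟩
    simp only
    have hne : (ball c r)ᶜ.Nonempty := by
      refine ⟨c + (r+1) • uvec n hn, ?_⟩
      simp only [mem_compl_iff, mem_ball, not_lt, dist_eq_norm, add_sub_cancel_left, norm_smul,
        norm_uvec hn, mul_one, Real.norm_eq_abs]
      rw [abs_of_pos (by linarith)]
      linarith
    by_contra hcon
    push_neg at hcon
    obtain ⟨w, hw, hdw⟩ := (infDist_lt_iff hne).mp hcon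
    have : dist w c < r := by
      calc dist w c ≤ dist w y + dist y c := dist_triangle _ _ _
        _ < Real.sqrt t + dist y c := by rw [dist_comm w y]; linarith
        _ ≤ r := by linarith
    exact hw (mem_ball.mpr this)

lemma tentBall_mono {n} (hn : 1 ≤ n) {c c' : Esp n} {r r' : ℝ}
    (h : dist c c' + r ≤ r') : tentBall n c r ⊆ tentBall n c' r' := by
  rintro ⟨t, y⟩ hz
  rw [mem_tentBall hn] at hz ⊢
  refine ⟨hz.1, ?_⟩
  calc dist y c' + Real.sqrt t ≤ dist y c + dist c c' + Real.sqrt t := by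
        linarith [dist_triangle y c c']
    _ ≤ r' := by linarith [hz.2]

lemma swap_kernel {α β : Type*} [MeasurableSpace α] [MeasurableSpace β]
    (μ : Measure α) (ν : Measure β) [SFinite μ] [SFinite ν]
    {f : α → ℝ≥0∞} {g : β → ℝ≥0∞} {S : Set (α × β)}
    (hf : Measurable f) (hg : Measurable g) (hS : MeasurableSet S) :
    ∫⁻ a, f a * ∫⁻ b, S.indicator 1 (a, b) * g b ∂ν ∂μ
      = ∫⁻ b, g b * ∫⁻ a, S.indicator 1 (a, b) * f a ∂μ ∂ν := by
  have hmeas : Measurable fun p : α × β => S.indicator 1 p * (f p.1 * g p.2) :=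
    ((measurable_one.indicator hS)).mul ((hf.comp measurable_fst).mul (hg.comp measurable_snd))
  have h1 : ∀ a, f a * ∫⁻ b, S.indicator 1 (a, b) * g b ∂ν
      = ∫⁻ b, S.indicator 1 (a, b) * (f a * g b) ∂ν := by
    intro a
    rw [← lintegral_const_mul _ (by
      exact ((measurable_one.indicator hS).comp measurable_prodMk_left).mul hg)]
    congr 1; ext b; ring
  have h2 : ∀ b, g b * ∫⁻ a, S.indicator 1 (a, b) * f a ∂μ
      = ∫⁻ a, S.indicator 1 (a, b) * (f a * g b) ∂μ := by
    intro b
    rw [← lintegral_const_mul _ (by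
      exact ((measurable_one.indicator hS).comp (measurable_prodMk_right)).mul hf)]
    congr 1; ext a; ring
  simp only [h1, h2]
  exact lintegral_lintegral_swap hmeas.aemeasurable

-- glue: set lintegral as indicator-kernel lintegral
lemma setLIntegral_indicator_kernel {β : Type*} [MeasurableSpace β] (ν : Measure β)
    {s : Set β} (hs : MeasurableSet s) (g : β → ℝ≥0∞) :
    ∫⁻ b in s, g b ∂ν = ∫⁻ b, s.indicator 1 b * g b ∂ν := by
  rw [← lintegral_indicator hs]
  congr 1; ext b
  by_cases hb : b ∈ s <;> simp [hb]

noncomputable def phiF (F : Zsp n → ℂ) : Zsp n → ℝ≥0∞ := fun z => ENNReal.ofReal (‖F z‖ ^ 2)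

lemma meas_phiF {F : Zsp n → ℂ} (hF : Measurable F) : Measurable (phiF F) :=
  ENNReal.measurable_ofReal.comp ((hF.norm).pow measurable_const)

noncomputable def glG (n : ℕ) (G : Zsp n → ℂ) : Zsp n → ℝ≥0∞ :=
  fun z => ENNReal.ofReal (‖G z‖ ^ 2 / z.1 ^ ((n:ℝ)/2))

lemma meas_glG {G : Zsp n → ℂ} (hG : Measurable G) : Measurable (glG n G) :=
  ENNReal.measurable_ofReal.comp
    (((hG.norm).pow measurable_const).div ((measurable_fst).pow measurable_const))

def coneSet (n : ℕ) (x : Esp n) : Set (Zsp n) := {z | dist z.2 x < Real.sqrt z.1}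

lemma coneSet_eq (x : Esp n) :
    {z : Zsp n | 0 < z.1 ∧ z.2 ∈ ball x (Real.sqrt z.1)} = coneSet n x := by
  ext z
  simp only [mem_setOf_eq, mem_ball, coneSet]
  constructor
  · rintro ⟨_, h⟩; exact h
  · intro h
    have : 0 < Real.sqrt z.1 := lt_of_le_of_lt dist_nonneg h
    exact ⟨Real.sqrt_pos.mp this, h⟩

lemma isOpen_coneJoint :
    IsOpen {p : Esp n × Zsp n | dist p.2.2 p.1 < Real.sqrt p.2.1} := by
  apply isOpen_lt
  · exact (continuous_snd.snd).dist (continuous_fst)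
  · exact Real.continuous_sqrt.comp (continuous_snd.fst)

lemma measurable_coneSet (x : Esp n) : MeasurableSet (coneSet n x) := by
  have : IsOpen (coneSet n x) := by
    apply isOpen_lt
    · exact continuous_snd.dist continuous_const
    · exact Real.continuous_sqrt.comp continuous_fst
  exact this.measurableSet

noncomputable def Ssq (n : ℕ) (G : Zsp n → ℂ) (x : Esp n) : ℝ≥0∞ :=
  ∫⁻ z in {z : Zsp n | 0 < z.1 ∧ z.2 ∈ ball x (Real.sqrt z.1)},
    ENNReal.ofReal (‖G z‖ ^ 2 / z.1 ^ ((n:ℝ)/2))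

lemma sqFn_eq (G : Zsp n → ℂ) (x : Esp n) : sqFn n G x = Ssq n G x ^ (1/2:ℝ) := rfl

lemma Ssq_eq_cone (G : Zsp n → ℂ) (x : Esp n) :
    Ssq n G x = ∫⁻ z in coneSet n x, glG n G z := by
  rw [Ssq, coneSet_eq]; rfl

lemma meas_Ssq {G : Zsp n → ℂ} (hG : Measurable G) : Measurable (Ssq n G) := by
  have h : ∀ x, Ssq n G x = ∫⁻ z,
      Set.indicator {p : Esp n × Zsp n | dist p.2.2 p.1 < Real.sqrt p.2.1} 1 (x, z)
        * glG n G z := by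
    intro x
    rw [Ssq_eq_cone, setLIntegral_indicator_kernel volume (measurable_coneSet x)]
    apply lintegral_congr
    intro z
    by_cases hz : dist z.2 x < Real.sqrt z.1 <;>
      simp [coneSet, Set.indicator_apply, hz]
  rw [show Ssq n G = _ from funext h]
  have hc1 : Continuous fun p : Esp n × Zsp n => dist p.2.2 p.1 :=
    continuous_snd.snd.dist continuous_fst
  have hc2 : Continuous fun p : Esp n × Zsp n => Real.sqrt p.2.1 :=
    Real.continuous_sqrt.comp continuous_snd.fst
  have hset : MeasurableSet {p : Esp n × Zsp n | dist p.2.2 p.1 < Real.sqrt p.2.1} :=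
    measurableSet_lt hc1.measurable hc2.measurable
  exact Measurable.lintegral_prod_right'
    (f := fun p : Esp n × Zsp n => Set.indicator {p : Esp n × Zsp n |
      dist p.2.2 p.1 < Real.sqrt p.2.1} 1 p * glG n G p.2)
    ((measurable_one.indicator hset).mul ((meas_glG hG).comp measurable_snd))

lemma meas_sqFn {G : Zsp n → ℂ} (hG : Measurable G) : Measurable (sqFn n G) := by
  have : sqFn n G = fun x => Ssq n G x ^ (1/2:ℝ) := rfl
  rw [this]
  exact (meas_Ssq hG).pow measurable_const

noncomputable def Tval (n : ℕ) (F : Zsp n → ℂ) (c : Esp n) (r : ℝ) : ℝ≥0∞ :=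
  (volume (ball c r))⁻¹ * ∫⁻ z in tentBall n c r, ENNReal.ofReal (‖F z‖ ^ 2)

noncomputable def Qf (n : ℕ) (D : Set (Esp n)) (F : Zsp n → ℂ) (x : Esp n) : ℝ≥0∞ :=
  ⨆ (p : D × ℚ) (_ : 0 < ((p.2:ℝ))) (_ : x ∈ ball (p.1:Esp n) (p.2:ℝ)), Tval n F p.1 p.2

lemma meas_Qf {D : Set (Esp n)} (hD : D.Countable) (F : Zsp n → ℂ) :
    Measurable (Qf n D F) := by
  haveI := hD.to_subtype
  apply Measurable.iSup
  rintro ⟨c, r⟩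
  apply Measurable.iSup
  intro hr
  have : (fun x => ⨆ (_ : x ∈ ball (c:Esp n) (r:ℝ)), Tval n F c r)
      = (ball (c:Esp n) (r:ℝ)).indicator (fun _ => Tval n F c r) := by
    ext x
    by_cases hx : x ∈ ball (c:Esp n) (r:ℝ) <;> simp [hx]
  exact this ▸ (measurable_const.indicator measurableSet_ball)

noncomputable def carlSup (n : ℕ) (F : Zsp n → ℂ) (x : Esp n) : ℝ≥0∞ :=
  ⨆ (c : Esp n) (r : ℝ) (_ : 0 < r) (_ : x ∈ ball c r), Tval n F c r

lemma carl2_eq (F : Zsp n → ℂ) (x : Esp n) : carl2 n F x = carlSup n F x ^ (1/2:ℝ) := rfl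

lemma Qf_le_carlSup (D : Set (Esp n)) (F : Zsp n → ℂ) (x : Esp n) :
    Qf n D F x ≤ carlSup n F x := by
  apply iSup_le
  rintro ⟨c, r⟩
  apply iSup_le
  intro hr
  apply iSup_le
  intro hx
  calc Tval n F c r
      ≤ ⨆ (_ : x ∈ ball (c:Esp n) (r:ℝ)), Tval n F (c:Esp n) (r:ℝ) :=
        le_iSup (fun _ : x ∈ ball (c:Esp n) (r:ℝ) => Tval n F (c:Esp n) (r:ℝ)) hx
    _ ≤ ⨆ (_ : 0 < ((r:ℝ))) (_ : x ∈ ball (c:Esp n) (r:ℝ)), Tval n F (c:Esp n) (r:ℝ) :=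
        le_iSup (fun _ : 0 < ((r:ℝ)) =>
          ⨆ (_ : x ∈ ball (c:Esp n) (r:ℝ)), Tval n F (c:Esp n) (r:ℝ)) hr
    _ ≤ ⨆ (r' : ℝ) (_ : 0 < r') (_ : x ∈ ball (c:Esp n) r'), Tval n F (c:Esp n) r' :=
        le_iSup (fun r' : ℝ =>
          ⨆ (_ : 0 < r') (_ : x ∈ ball (c:Esp n) r'), Tval n F (c:Esp n) r') (r:ℝ)
    _ ≤ carlSup n F x :=
        le_iSup (fun c' : Esp n =>
          ⨆ (r' : ℝ) (_ : 0 < r') (_ : x ∈ ball c' r'), Tval n F c' r') (c:Esp n)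

lemma Tval_le_Qf {D : Set (Esp n)} {F : Zsp n → ℂ} {c : Esp n} (hc : c ∈ D) (r : ℚ)
    (hr : 0 < (r:ℝ)) {x : Esp n} (hx : x ∈ ball c (r:ℝ)) :
    Tval n F c r ≤ Qf n D F x := by
  calc Tval n F c r
      ≤ ⨆ (_ : x ∈ ball c (r:ℝ)), Tval n F c r :=
        le_iSup (fun _ : x ∈ ball c (r:ℝ) => Tval n F c r) hx
    _ ≤ ⨆ (_ : 0 < ((r:ℝ))) (_ : x ∈ ball c (r:ℝ)), Tval n F c r :=
        le_iSup (fun _ : 0 < ((r:ℝ)) =>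
          ⨆ (_ : x ∈ ball c (r:ℝ)), Tval n F c r) hr
    _ ≤ Qf n D F x := le_iSup (fun p : D × ℚ =>
        ⨆ (_ : 0 < ((p.2:ℝ))) (_ : x ∈ ball (p.1:Esp n) (p.2:ℝ)), Tval n F p.1 p.2)
        (⟨⟨c, hc⟩, r⟩ : D × ℚ)

noncomputable def rho (n : ℕ) (D : Set (Esp n)) (F G : Zsp n → ℂ) (x : Esp n) : ℝ≥0∞ :=
  sqFn n G x / (Qf n D F x) ^ (1/2:ℝ)

lemma meas_rho {D : Set (Esp n)} (hD : D.Countable) {F G : Zsp n → ℂ}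
    (hG : Measurable G) : Measurable (rho n D F G) :=
  (meas_sqFn hG).div ((meas_Qf hD F).pow measurable_const)

-- measurability of z ↦ volume (ball z.2 (sqrt z.1) ∩ U)
lemma meas_volInter {U : Set (Esp n)} (hU : MeasurableSet U) :
    Measurable fun z : Zsp n => volume (ball z.2 (Real.sqrt z.1) ∩ U) := by
  have h : ∀ z : Zsp n, volume (ball z.2 (Real.sqrt z.1) ∩ U)
      = ∫⁻ x, Set.indicator {p : Zsp n × Esp n |
          dist p.2 p.1.2 < Real.sqrt p.1.1 ∧ p.2 ∈ U} 1 (z, x) := by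
    intro z
    rw [← lintegral_indicator_one (measurableSet_ball.inter hU)]
    apply lintegral_congr
    intro x
    by_cases h1 : dist x z.2 < Real.sqrt z.1 <;> by_cases h2 : x ∈ U <;>
      simp [Set.indicator_apply, mem_ball, h1, h2]
  rw [show (fun z : Zsp n => volume (ball z.2 (Real.sqrt z.1) ∩ U)) = _ from funext h]
  have h1 : Continuous fun p : Zsp n × Esp n => dist p.2 p.1.2 :=
    continuous_snd.dist continuous_fst.snd
  have h2 : Continuous fun p : Zsp n × Esp n => Real.sqrt p.1.1 :=
    Real.continuous_sqrt.comp continuous_fst.fst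
  have hset : MeasurableSet {p : Zsp n × Esp n | dist p.2 p.1.2 < Real.sqrt p.1.1 ∧ p.2 ∈ U} :=
    (measurableSet_lt h1.measurable h2.measurable).inter (measurable_snd hU)
  exact Measurable.lintegral_prod_right'
    (f := fun p : Zsp n × Esp n => Set.indicator {p : Zsp n × Esp n |
      dist p.2 p.1.2 < Real.sqrt p.1.1 ∧ p.2 ∈ U} 1 p)
    (measurable_one.indicator hset)

lemma meas_volBall :
    Measurable fun z : Zsp n => volume (ball z.2 (Real.sqrt z.1)) := by
  have : (fun z : Zsp n => volume (ball z.2 (Real.sqrt z.1)))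
      = fun z : Zsp n => volume (ball z.2 (Real.sqrt z.1) ∩ univ) := by
    simp
  rw [this]
  exact meas_volInter MeasurableSet.univ

def RU (n : ℕ) (U : Set (Esp n)) : Set (Zsp n) :=
  {z | 0 < z.1 ∧ volume (ball z.2 (Real.sqrt z.1))
    ≤ 2 * volume (ball z.2 (Real.sqrt z.1) ∩ U)}

lemma meas_RU {U : Set (Esp n)} (hU : MeasurableSet U) : MeasurableSet (RU n U) := by
  rw [RU, Set.setOf_and]
  apply MeasurableSet.inter
  · exact measurableSet_lt measurable_const measurable_fst
  · have hb : Measurable fun z : Zsp n => (2:ℝ≥0∞) * volume (ball z.2 (Real.sqrt z.1) ∩ U) :=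
      (meas_volInter hU).const_mul 2
    exact measurableSet_le meas_volBall hb

def Urho {n : ℕ} (ρ : Esp n → ℝ≥0∞) (q : ℝ≥0∞) : Set (Esp n) := {x | q < ρ x}

lemma meas_Urho {ρ : Esp n → ℝ≥0∞} (hρ : Measurable ρ) (q : ℝ≥0∞) :
    MeasurableSet (Urho ρ q) := measurableSet_lt measurable_const hρ

def mA (n : ℕ) (ρ : Esp n → ℝ≥0∞) : Set (ℝ × Zsp n) :=
  {p | 0 < p.1 ∧ p.2 ∈ RU n (Urho ρ (ENNReal.ofReal p.1))}

lemma meas_volInterJoint {ρ : Esp n → ℝ≥0∞} (hρ : Measurable ρ) :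
    Measurable fun p : ℝ × Zsp n =>
      volume (ball p.2.2 (Real.sqrt p.2.1) ∩ Urho ρ (ENNReal.ofReal p.1)) := by
  have h : ∀ p : ℝ × Zsp n, volume (ball p.2.2 (Real.sqrt p.2.1) ∩ Urho ρ (ENNReal.ofReal p.1))
      = ∫⁻ x, Set.indicator {q : (ℝ × Zsp n) × Esp n |
          dist q.2 q.1.2.2 < Real.sqrt q.1.2.1 ∧ ENNReal.ofReal q.1.1 < ρ q.2} 1 (p, x) := by
    intro p
    rw [← lintegral_indicator_one (measurableSet_ball.inter (meas_Urho hρ _))]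
    apply lintegral_congr
    intro x
    by_cases h1 : dist x p.2.2 < Real.sqrt p.2.1 <;>
      by_cases h2 : ENNReal.ofReal p.1 < ρ x <;>
      simp [Set.indicator_apply, mem_ball, Urho, h1, h2]
  rw [show (fun p : ℝ × Zsp n =>
    volume (ball p.2.2 (Real.sqrt p.2.1) ∩ Urho ρ (ENNReal.ofReal p.1))) = _ from funext h]
  have h1 : Continuous fun q : (ℝ × Zsp n) × Esp n => dist q.2 q.1.2.2 :=
    continuous_snd.dist continuous_fst.snd.snd
  have h2 : Continuous fun q : (ℝ × Zsp n) × Esp n => Real.sqrt q.1.2.1 :=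
    Real.continuous_sqrt.comp continuous_fst.snd.fst
  have h3 : Measurable fun q : (ℝ × Zsp n) × Esp n => ENNReal.ofReal q.1.1 :=
    ENNReal.measurable_ofReal.comp continuous_fst.fst.measurable
  have h4 : Measurable fun q : (ℝ × Zsp n) × Esp n => ρ q.2 := hρ.comp measurable_snd
  have hset : MeasurableSet {q : (ℝ × Zsp n) × Esp n |
      dist q.2 q.1.2.2 < Real.sqrt q.1.2.1 ∧ ENNReal.ofReal q.1.1 < ρ q.2} := by
    rw [Set.setOf_and]
    exact (measurableSet_lt h1.measurable h2.measurable).inter (measurableSet_lt h3 h4)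
  exact Measurable.lintegral_prod_right'
    (f := fun q : (ℝ × Zsp n) × Esp n => Set.indicator {q : (ℝ × Zsp n) × Esp n |
      dist q.2 q.1.2.2 < Real.sqrt q.1.2.1 ∧ ENNReal.ofReal q.1.1 < ρ q.2} 1 q)
    (measurable_one.indicator hset)

lemma meas_mA {ρ : Esp n → ℝ≥0∞} (hρ : Measurable ρ) : MeasurableSet (mA n ρ) := by
  have : mA n ρ = {p : ℝ × Zsp n | 0 < p.1} ∩ ({p | 0 < p.2.1} ∩
      {p | volume (ball p.2.2 (Real.sqrt p.2.1))
        ≤ 2 * volume (ball p.2.2 (Real.sqrt p.2.1) ∩ Urho ρ (ENNReal.ofReal p.1))}) := by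
    ext p
    simp only [mA, RU, Set.mem_inter_iff, Set.mem_setOf_eq]
    try tauto
  rw [this]
  refine (measurableSet_lt measurable_const measurable_fst).inter
    ((measurableSet_lt measurable_const measurable_snd.fst).inter ?_)
  have hb : Measurable fun p : ℝ × Zsp n =>
      (2:ℝ≥0∞) * volume (ball p.2.2 (Real.sqrt p.2.1) ∩ Urho ρ (ENNReal.ofReal p.1)) :=
    (meas_volInterJoint hρ).const_mul 2
  have ha : Measurable fun p : ℝ × Zsp n => volume (ball p.2.2 (Real.sqrt p.2.1)) :=
    meas_volBall.comp measurable_snd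
  exact measurableSet_le ha hb

noncomputable def mfun (n : ℕ) (ρ : Esp n → ℝ≥0∞) (z : Zsp n) : ℝ≥0∞ :=
  ∫⁻ l : ℝ, (mA n ρ).indicator 1 (l, z)

lemma meas_mfun {ρ : Esp n → ℝ≥0∞} (hρ : Measurable ρ) : Measurable (mfun n ρ) :=
  Measurable.lintegral_prod_left' (f := (mA n ρ).indicator 1)
    (measurable_one.indicator (meas_mA hρ))

lemma mA_anti {ρ : Esp n → ℝ≥0∞} {l l' : ℝ} (hl' : 0 < l') (hll : l' ≤ l) {z : Zsp n}
    (hz : (l, z) ∈ mA n ρ) : (l', z) ∈ mA n ρ := by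
  obtain ⟨hl, hz1, hz2⟩ := hz
  refine ⟨hl', hz1, le_trans hz2 ?_⟩
  have hsub : Urho ρ (ENNReal.ofReal l) ⊆ Urho ρ (ENNReal.ofReal l') :=
    fun x hx => lt_of_le_of_lt (ENNReal.ofReal_le_ofReal hll) hx
  exact mul_le_mul_right (measure_mono (Set.inter_subset_inter_right _ hsub)) 2

lemma mfun_ge {ρ : Esp n → ℝ≥0∞} {z : Zsp n} {l : ℝ} (hl : 0 < l)
    (hz : (l, z) ∈ mA n ρ) : ENNReal.ofReal l ≤ mfun n ρ z := by
  have h1 : ∀ l' ∈ Set.Ioc (0:ℝ) l, (1:ℝ≥0∞) ≤ (mA n ρ).indicator 1 (l', z) := by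
    intro l' hl'
    rw [Set.indicator_of_mem (mA_anti hl'.1 hl'.2 hz)]
    rfl
  calc ENNReal.ofReal l = volume (Set.Ioc (0:ℝ) l) := by
        rw [Real.volume_Ioc, sub_zero]
    _ = ∫⁻ _ in Set.Ioc (0:ℝ) l, (1:ℝ≥0∞) := by
        rw [setLIntegral_const, one_mul]
    _ ≤ ∫⁻ l' in Set.Ioc (0:ℝ) l, (mA n ρ).indicator 1 (l', z) := by
        apply setLIntegral_mono' measurableSet_Ioc h1
    _ ≤ ∫⁻ l' : ℝ, (mA n ρ).indicator 1 (l', z) := setLIntegral_le_lintegral _ _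
    _ = mfun n ρ z := rfl

lemma minv_le {ρ : Esp n → ℝ≥0∞} (hρ : Measurable ρ) {z : Zsp n} (hz : 0 < z.1) :
    (mfun n ρ z)⁻¹ * (volume (ball z.2 (Real.sqrt z.1)) / 2)
      ≤ ∫⁻ x in ball z.2 (Real.sqrt z.1), (ρ x)⁻¹ := by
  set v := volume (ball z.2 (Real.sqrt z.1)) with hv
  set I := ∫⁻ x in ball z.2 (Real.sqrt z.1), (ρ x)⁻¹ with hI
  have hvne : v ≠ ∞ := measure_ball_lt_top.ne
  have key : ∀ l : ℝ, 0 < l → mfun n ρ z < ENNReal.ofReal l →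
      (ENNReal.ofReal l)⁻¹ * (v / 2) ≤ I := by
    intro l hl hml
    have hnot : (l, z) ∉ mA n ρ := fun hmem => absurd (mfun_ge hl hmem) (not_le.mpr hml)
    have hlt : ¬ v ≤ 2 * volume (ball z.2 (Real.sqrt z.1) ∩ Urho ρ (ENNReal.ofReal l)) := by
      intro hcon
      exact hnot ⟨hl, hz, hcon⟩
    push_neg at hlt
    -- the complement part has measure at least v/2
    have hsplit := measure_inter_add_diff (μ := (volume : Measure (Esp n)))
      (ball z.2 (Real.sqrt z.1)) (meas_Urho hρ (ENNReal.ofReal l))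
    have ha : volume (ball z.2 (Real.sqrt z.1) ∩ Urho ρ (ENNReal.ofReal l)) < v / 2 := by
      rw [ENNReal.lt_div_iff_mul_lt (Or.inl two_ne_zero) (Or.inl ENNReal.ofNat_ne_top)]
      rw [mul_comm]
      exact hlt
    have hb : v / 2 ≤ volume (ball z.2 (Real.sqrt z.1) \ Urho ρ (ENNReal.ofReal l)) := by
      by_contra hcon
      push_neg at hcon
      have := ENNReal.add_lt_add ha hcon
      rw [hsplit, ENNReal.add_halves] at this
      exact lt_irrefl _ this
    calc (ENNReal.ofReal l)⁻¹ * (v / 2)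
        ≤ (ENNReal.ofReal l)⁻¹ * volume (ball z.2 (Real.sqrt z.1) \ Urho ρ (ENNReal.ofReal l)) :=
          mul_le_mul_right hb _
      _ = ∫⁻ _ in ball z.2 (Real.sqrt z.1) \ Urho ρ (ENNReal.ofReal l), (ENNReal.ofReal l)⁻¹ := by
          rw [setLIntegral_const]
      _ ≤ ∫⁻ x in ball z.2 (Real.sqrt z.1) \ Urho ρ (ENNReal.ofReal l), (ρ x)⁻¹ := by
          apply setLIntegral_mono hρ.inv
          intro x hx
          have : ¬ (ENNReal.ofReal l < ρ x) := hx.2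
          exact ENNReal.inv_le_inv.mpr (not_lt.mp this)
      _ ≤ I := lintegral_mono_set Set.diff_subset
  rcases eq_or_ne (mfun n ρ z) ∞ with hm | hm
  · rw [hm]; simp
  · -- approximate from above
    set m := mfun n ρ z with hmdef
    have hk : ∀ k : ℕ, (ENNReal.ofReal (m.toReal + 1/(k+1)))⁻¹ * (v / 2) ≤ I := by
      intro k
      apply key
      · positivity
      · rw [ENNReal.lt_ofReal_iff_toReal_lt hm]
        have : (0:ℝ) < 1/(k+1) := by positivity
        linarith
    have hofr : ∀ k : ℕ, ENNReal.ofReal (m.toReal + 1/(k+1))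
        = m + ENNReal.ofReal (1/(k+1)) := by
      intro k
      rw [ENNReal.ofReal_add ENNReal.toReal_nonneg (by positivity), ENNReal.ofReal_toReal hm]
    have hiInf : (⨅ k : ℕ, (m + ENNReal.ofReal (1/(k+1:ℕ)))) = m := by
      apply le_antisymm
      · apply ENNReal.le_of_forall_pos_le_add
        intro ε hε _
        obtain ⟨k, hk'⟩ := exists_nat_one_div_lt (show (0:ℝ) < (ε:ℝ) from hε)
        refine le_trans (iInf_le _ k) ?_
        apply add_le_add_right
        rw [show ((k:ℝ)+1) = ((k+1:ℕ):ℝ) by push_cast; ring] at hk'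
        calc ENNReal.ofReal (1/(k+1:ℕ)) ≤ ENNReal.ofReal (ε:ℝ) :=
              ENNReal.ofReal_le_ofReal hk'.le
          _ = ε := ENNReal.ofReal_coe_nnreal
      · exact le_iInf fun k => le_self_add
    calc m⁻¹ * (v/2) = (⨅ k : ℕ, (m + ENNReal.ofReal (1/(k+1:ℕ))))⁻¹ * (v/2) := by rw [hiInf]
      _ = (⨆ k : ℕ, (m + ENNReal.ofReal (1/(k+1:ℕ)))⁻¹) * (v/2) := by
          rw [ENNReal.inv_iInf]
      _ = ⨆ k : ℕ, (m + ENNReal.ofReal (1/(k+1:ℕ)))⁻¹ * (v/2) := by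
          rw [ENNReal.iSup_mul]
      _ ≤ I := by
          apply iSup_le
          intro k
          have := hk k
          rw [hofr k] at this
          exact_mod_cast this

lemma meas_tentBall (c : Esp n) (r : ℝ) : MeasurableSet (tentBall n c r) := by
  rw [show tentBall n c r = {z : Zsp n | 0 < z.1} ∩
    {z : Zsp n | Real.sqrt z.1 ≤ infDist z.2 (ball c r)ᶜ} from Set.setOf_and]
  refine (measurableSet_lt measurable_const measurable_fst).inter ?_
  have h1 : Continuous fun z : Zsp n => Real.sqrt z.1 :=
    Real.continuous_sqrt.comp continuous_fst
  have h2 : Continuous fun z : Zsp n => infDist z.2 (ball c r)ᶜ :=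
    (continuous_infDist_pt ((ball c r)ᶜ)).comp continuous_snd
  exact measurableSet_le h1.measurable h2.measurable

lemma mem_self_tent (hn : 1 ≤ n) {z : Zsp n} (hz : 0 < z.1) :
    z ∈ tentBall n z.2 (2 * Real.sqrt z.1) := by
  have : ((z.1, z.2) : Zsp n) ∈ tentBall n z.2 (2 * Real.sqrt z.1) := by
    rw [mem_tentBall hn]
    refine ⟨hz, ?_⟩
    have h0 : 0 ≤ Real.sqrt z.1 := Real.sqrt_nonneg _
    simp only [dist_self]
    linarith
  simpa using this

lemma tent_cover_lemma (hn : 1 ≤ n) {y w : Esp n} {t s : ℝ} (ht : 0 < t)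
    (h : closedBall y (2 * Real.sqrt t) ⊆ closedBall w (5 * (2 * Real.sqrt s))) :
    tentBall n y (2 * Real.sqrt t) ⊆ tentBall n w (30 * Real.sqrt s) := by
  have hst : 0 < Real.sqrt t := Real.sqrt_pos.mpr ht
  have h1 : dist y w ≤ 10 * Real.sqrt s := by
    have := h (mem_closedBall_self (by positivity))
    rw [mem_closedBall] at this
    linarith
  have hp : y + (2 * Real.sqrt t) • uvec n hn ∈ closedBall y (2 * Real.sqrt t) := by
    rw [mem_closedBall, dist_eq_norm, add_sub_cancel_left, norm_smul, norm_uvec hn,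
      Real.norm_eq_abs, abs_of_pos (by positivity), mul_one]
  have hdist : dist (y + (2 * Real.sqrt t) • uvec n hn) y = 2 * Real.sqrt t := by
    rw [dist_eq_norm, add_sub_cancel_left, norm_smul, norm_uvec hn,
      Real.norm_eq_abs, abs_of_pos (by positivity), mul_one]
  have h2 : 2 * Real.sqrt t ≤ 20 * Real.sqrt s := by
    have hw := h hp
    rw [mem_closedBall] at hw
    calc 2 * Real.sqrt t = dist (y + (2 * Real.sqrt t) • uvec n hn) y := hdist.symm
      _ ≤ dist (y + (2 * Real.sqrt t) • uvec n hn) w + dist w y := dist_triangle _ _ _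
      _ ≤ 5 * (2 * Real.sqrt s) + 10 * Real.sqrt s := by
          rw [dist_comm w y]; exact add_le_add hw h1
      _ = 20 * Real.sqrt s := by ring
  exact tentBall_mono hn (by linarith)

/-- The Carleson-type estimate on sets where `U` fills half of the associated ball
(Vitali covering argument). -/
lemma claim (hn : 1 ≤ n) {D : Set (Esp n)} (hDc : D.Countable) (hDd : Dense D)
    {F : Zsp n → ℂ} (hF : Measurable F) {U : Set (Esp n)} (hU : MeasurableSet U) :
    ∫⁻ z in RU n U, ENNReal.ofReal (‖F z‖ ^ 2)
      ≤ 2 * ENNReal.ofReal ((32:ℝ)^n) * ∫⁻ x in U, Qf n D F x := by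
  classical
  set Kc : ℝ≥0∞ := 2 * ENNReal.ofReal ((32:ℝ)^n) with hKc
  set μd := volume.withDensity (phiF F) with hμd
  set μQ := volume.withDensity (Qf n D F) with hμQ
  have hμds : ∀ s : Set (Zsp n), MeasurableSet s →
      μd s = ∫⁻ z in s, ENNReal.ofReal (‖F z‖ ^ 2) := fun s hs => by
    rw [hμd, withDensity_apply _ hs]; rfl
  rw [← hμds _ (meas_RU hU), ← withDensity_apply _ hU]
  -- exhaust by bounded-height pieces
  set W : ℕ → Set (Zsp n) := fun N => RU n U ∩ {z : Zsp n | z.1 ≤ (N:ℝ)} with hW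
  have hWmono : Monotone W := by
    intro N M hNM
    apply Set.inter_subset_inter_right
    intro z hz
    calc z.1 ≤ (N:ℝ) := hz
      _ ≤ (M:ℝ) := by exact_mod_cast hNM
  have hunion : RU n U = ⋃ N : ℕ, W N := by
    ext z
    simp only [Set.mem_iUnion, hW, Set.mem_inter_iff, Set.mem_setOf_eq]
    constructor
    · intro hz; exact ⟨⌈z.1⌉₊, hz, Nat.le_ceil z.1⟩
    · rintro ⟨N, hz, _⟩; exact hz
  rw [hunion, Directed.measure_iUnion (hWmono.directed_le)]
  apply iSup_le
  intro N
  -- Vitali covering for W N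
  obtain ⟨u, hu_sub, hu_disj, hu_cov⟩ :=
    Vitali.exists_disjoint_subfamily_covering_enlargement_closedBall (W N)
      (fun z => z.2) (fun z => 2 * Real.sqrt z.1) (2 * Real.sqrt N)
      (fun a ha => by
        show 2 * Real.sqrt a.1 ≤ 2 * Real.sqrt (N:ℝ)
        have h1 : a.1 ≤ (N:ℝ) := ha.2
        have h2 := Real.sqrt_le_sqrt h1
        linarith) 5 (by norm_num)
  have hu_cnt : u.Countable := by
    apply Set.PairwiseDisjoint.countable_of_nonempty_interior hu_disj
    intro b hb
    have hb1 : 0 < b.1 := (hu_sub hb).1.1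
    have : 0 < 2 * Real.sqrt b.1 := by
      have := Real.sqrt_pos.mpr hb1; linarith
    rw [interior_closedBall _ (ne_of_gt this)]
    exact nonempty_ball.mpr this
  have hcover : W N ⊆ ⋃ b ∈ u, tentBall n b.2 (30 * Real.sqrt b.1) := by
    intro a ha
    obtain ⟨b, hb, hsub⟩ := hu_cov a ha
    have ha1 : 0 < a.1 := ha.1.1
    refine Set.mem_biUnion hb ?_
    exact tent_cover_lemma hn ha1 hsub (mem_self_tent hn ha1)
  -- the per-ball bound
  have hXb : ∀ b ∈ u, μd (tentBall n b.2 (30 * Real.sqrt b.1))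
      ≤ Kc * μQ (ball b.2 (Real.sqrt b.1) ∩ U) := by
    intro b hb
    have hbW : b ∈ W N := hu_sub hb
    have hb1 : 0 < b.1 := hbW.1.1
    have hbRU : b ∈ RU n U := hbW.1
    have hsq : 0 < Real.sqrt b.1 := Real.sqrt_pos.mpr hb1
    -- choose an approximating rational ball
    obtain ⟨c', hc'D, hc'b⟩ : ∃ c' ∈ D, c' ∈ ball b.2 (Real.sqrt b.1) := by
      have hne : (ball b.2 (Real.sqrt b.1)).Nonempty := nonempty_ball.mpr hsq
      obtain ⟨c', hc'1, hc'2⟩ := hDd.exists_mem_open isOpen_ball hne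
      exact ⟨c', hc'1, hc'2⟩
    obtain ⟨r', hr1, hr2⟩ :=
      exists_rat_btwn (show 31 * Real.sqrt b.1 < 32 * Real.sqrt b.1 by nlinarith)
    have hr'pos : 0 < (r' : ℝ) := lt_trans (by positivity) hr1
    have htent : tentBall n b.2 (30 * Real.sqrt b.1) ⊆ tentBall n c' (r' : ℝ) := by
      apply tentBall_mono hn
      have := mem_ball.mp hc'b
      rw [dist_comm]
      linarith
    have hballs : ball b.2 (Real.sqrt b.1) ⊆ ball c' (r' : ℝ) := by
      intro x hx
      rw [mem_ball] at hx ⊢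
      have h1 := mem_ball.mp hc'b
      calc dist x c' ≤ dist x b.2 + dist b.2 c' := dist_triangle _ _ _
        _ < Real.sqrt b.1 + Real.sqrt b.1 := by rw [dist_comm b.2 c']; linarith
        _ ≤ (r' : ℝ) := by linarith
    have hvol' : volume (ball c' (r' : ℝ))
        ≤ ENNReal.ofReal ((32:ℝ)^n) * volume (ball b.2 (Real.sqrt b.1)) := by
      rw [vol_ball hn _ hr'pos.le, vol_ball hn _ (Real.sqrt_nonneg _), ← mul_assoc,
        ← ENNReal.ofReal_mul (by positivity)]
      apply mul_le_mul_left
      apply ENNReal.ofReal_le_ofReal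
      calc (r' : ℝ)^n ≤ (32 * Real.sqrt b.1)^n := by
            apply pow_le_pow_left₀ hr'pos.le hr2.le
        _ = 32^n * (Real.sqrt b.1)^n := mul_pow _ _ _
    set Sb := ball b.2 (Real.sqrt b.1) ∩ U with hSb
    have hSbm : MeasurableSet Sb := measurableSet_ball.inter hU
    have hvol2 : volume (ball b.2 (Real.sqrt b.1)) ≤ 2 * volume Sb := hbRU.2
    have hSb_pos : volume Sb ≠ 0 := by
      intro h0
      rw [h0, mul_zero] at hvol2
      exact absurd (le_antisymm hvol2 zero_le)
        (measure_ball_pos volume _ hsq).ne'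
    have hSb_fin : volume Sb ≠ ∞ :=
      ((measure_mono Set.inter_subset_left).trans_lt measure_ball_lt_top).ne
    have hXx : ∀ x ∈ Sb, μd (tentBall n b.2 (30 * Real.sqrt b.1))
        ≤ volume (ball c' (r' : ℝ)) * Qf n D F x := by
      intro x hx
      have hxball : x ∈ ball c' (r' : ℝ) := hballs hx.1
      have hT := Tval_le_Qf (F := F) hc'D r' hr'pos hxball
      have hbne : volume (ball c' (r' : ℝ)) ≠ 0 := (measure_ball_pos volume _ hr'pos).ne'
      have hbfin : volume (ball c' (r' : ℝ)) ≠ ∞ := measure_ball_lt_top.ne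
      calc μd (tentBall n b.2 (30 * Real.sqrt b.1))
          ≤ μd (tentBall n c' (r' : ℝ)) := measure_mono htent
        _ = ∫⁻ z in tentBall n c' (r' : ℝ), ENNReal.ofReal (‖F z‖ ^ 2) :=
            hμds _ (meas_tentBall _ _)
        _ = volume (ball c' (r' : ℝ)) * Tval n F c' (r' : ℝ) := by
            rw [Tval, ← mul_assoc, ENNReal.mul_inv_cancel hbne hbfin, one_mul]
        _ ≤ volume (ball c' (r' : ℝ)) * Qf n D F x := mul_le_mul_right hT _
    have hint : μd (tentBall n b.2 (30 * Real.sqrt b.1)) * volume Sb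
        ≤ (Kc * μQ Sb) * volume Sb := by
      calc μd (tentBall n b.2 (30 * Real.sqrt b.1)) * volume Sb
          = ∫⁻ _ in Sb, μd (tentBall n b.2 (30 * Real.sqrt b.1)) := by
            rw [setLIntegral_const]
        _ ≤ ∫⁻ x in Sb, volume (ball c' (r' : ℝ)) * Qf n D F x :=
            setLIntegral_mono ((meas_Qf hDc F).const_mul _) hXx
        _ = volume (ball c' (r' : ℝ)) * ∫⁻ x in Sb, Qf n D F x := by
            rw [lintegral_const_mul _ (meas_Qf hDc F)]
        _ = volume (ball c' (r' : ℝ)) * μQ Sb := by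
            rw [hμQ, withDensity_apply _ hSbm]
        _ ≤ (ENNReal.ofReal ((32:ℝ)^n) * (2 * volume Sb)) * μQ Sb := by
            apply mul_le_mul_left
            exact le_trans hvol' (mul_le_mul_right hvol2 _)
        _ = (Kc * μQ Sb) * volume Sb := by rw [hKc]; ring
    exact (ENNReal.mul_le_mul_iff_left hSb_pos hSb_fin).mp hint
  -- summing up
  have hSdisj : Pairwise fun i j : u =>
      Disjoint (ball (i:Zsp n).2 (Real.sqrt (i:Zsp n).1) ∩ U)
        (ball (j:Zsp n).2 (Real.sqrt (j:Zsp n).1) ∩ U) := by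
    intro i j hij
    have hd := hu_disj i.2 j.2 (Subtype.coe_injective.ne hij)
    apply Disjoint.mono _ _ hd
    · refine Set.inter_subset_left.trans (ball_subset_closedBall.trans
        (closedBall_subset_closedBall ?_))
      have := Real.sqrt_nonneg (i:Zsp n).1; linarith
    · refine Set.inter_subset_left.trans (ball_subset_closedBall.trans
        (closedBall_subset_closedBall ?_))
      have := Real.sqrt_nonneg (j:Zsp n).1; linarith
  haveI := hu_cnt.to_subtype
  calc μd (W N) ≤ μd (⋃ b ∈ u, tentBall n b.2 (30 * Real.sqrt b.1)) :=
        measure_mono hcover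
    _ ≤ ∑' b : u, μd (tentBall n (b:Zsp n).2 (30 * Real.sqrt (b:Zsp n).1)) :=
        measure_biUnion_le μd hu_cnt _
    _ ≤ ∑' b : u, Kc * μQ (ball (b:Zsp n).2 (Real.sqrt (b:Zsp n).1) ∩ U) :=
        ENNReal.tsum_le_tsum (fun b => hXb b b.2)
    _ = Kc * ∑' b : u, μQ (ball (b:Zsp n).2 (Real.sqrt (b:Zsp n).1) ∩ U) :=
        ENNReal.tsum_mul_left
    _ = Kc * μQ (⋃ b : u, (ball (b:Zsp n).2 (Real.sqrt (b:Zsp n).1) ∩ U)) := by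
        rw [measure_iUnion hSdisj (fun b => measurableSet_ball.inter hU)]
    _ ≤ Kc * μQ U := by
        apply mul_le_mul_right
        apply measure_mono
        exact Set.iUnion_subset (fun b => Set.inter_subset_right)

lemma meas_ballLIntegral {g : Esp n → ℝ≥0∞} (hg : Measurable g) :
    Measurable fun z : Zsp n => ∫⁻ x in ball z.2 (Real.sqrt z.1), g x := by
  have h : ∀ z : Zsp n, ∫⁻ x in ball z.2 (Real.sqrt z.1), g x
      = ∫⁻ x, Set.indicator {p : Zsp n × Esp n |
          dist p.2 p.1.2 < Real.sqrt p.1.1} 1 (z, x) * g x := by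
    intro z
    rw [setLIntegral_indicator_kernel volume measurableSet_ball g]
    apply lintegral_congr
    intro x
    by_cases h1 : dist x z.2 < Real.sqrt z.1 <;>
      simp [Set.indicator_apply, mem_ball, h1]
  rw [show (fun z : Zsp n => ∫⁻ x in ball z.2 (Real.sqrt z.1), g x) = _ from funext h]
  have h1 : Continuous fun p : Zsp n × Esp n => dist p.2 p.1.2 :=
    continuous_snd.dist continuous_fst.snd
  have h2 : Continuous fun p : Zsp n × Esp n => Real.sqrt p.1.1 :=
    Real.continuous_sqrt.comp continuous_fst.fst
  have hset : MeasurableSet {p : Zsp n × Esp n | dist p.2 p.1.2 < Real.sqrt p.1.1} :=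
    measurableSet_lt h1.measurable h2.measurable
  exact Measurable.lintegral_prod_right'
    (f := fun p : Zsp n × Esp n => Set.indicator {p : Zsp n × Esp n |
      dist p.2 p.1.2 < Real.sqrt p.1.1} 1 p * g p.2)
    ((measurable_one.indicator hset).mul (hg.comp measurable_snd))

lemma vol_ball_sqrt (hn : 1 ≤ n) {z : Zsp n} (hz : 0 < z.1) :
    volume (ball z.2 (Real.sqrt z.1)) = ENNReal.ofReal (z.1 ^ ((n:ℝ)/2)) * vball n := by
  rw [vol_ball hn _ (Real.sqrt_nonneg _)]
  congr 2
  rw [← Real.rpow_natCast (Real.sqrt z.1) n, Real.sqrt_eq_rpow, ← Real.rpow_mul hz.le]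
  congr 1
  ring

lemma cone_eval (hn : 1 ≤ n) {G : Zsp n → ℂ} (hG : Measurable G) (x : Esp n) :
    ∫⁻ z in coneSet n x, phiF G z * (volume (ball z.2 (Real.sqrt z.1)))⁻¹
      = (vball n)⁻¹ * Ssq n G x := by
  rw [Ssq_eq_cone, ← lintegral_const_mul ((vball n)⁻¹) (meas_glG hG)]
  apply setLIntegral_congr_fun (measurable_coneSet x)
  intro z hz
  have hz1 : 0 < z.1 := Real.sqrt_pos.mp (lt_of_le_of_lt dist_nonneg hz)
  have hpow : 0 < z.1 ^ ((n:ℝ)/2) := Real.rpow_pos_of_pos hz1 _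
  dsimp only
  rw [vol_ball_sqrt hn hz1,
    ENNReal.mul_inv (Or.inl (ENNReal.ofReal_pos.mpr hpow).ne') (Or.inl ENNReal.ofReal_ne_top)]
  have hg : glG n G z = ENNReal.ofReal (‖G z‖^2) * (ENNReal.ofReal (z.1 ^ ((n:ℝ)/2)))⁻¹ := by
    rw [glG, ENNReal.ofReal_div_of_pos hpow, div_eq_mul_inv]
  rw [hg]
  show ENNReal.ofReal (‖G z‖^2) * ((ENNReal.ofReal (z.1 ^ ((n:ℝ)/2)))⁻¹ * (vball n)⁻¹)
      = (vball n)⁻¹ * (ENNReal.ofReal (‖G z‖^2) * (ENNReal.ofReal (z.1 ^ ((n:ℝ)/2)))⁻¹)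
  ring

lemma meas_lQ {D : Set (Esp n)} (hDc : D.Countable) (F : Zsp n → ℂ)
    {ρ : Esp n → ℝ≥0∞} (hρm : Measurable ρ) :
    Measurable fun l : ℝ => ∫⁻ x in Urho ρ (ENNReal.ofReal l), Qf n D F x := by
  have h : ∀ l : ℝ, ∫⁻ x in Urho ρ (ENNReal.ofReal l), Qf n D F x
      = ∫⁻ x, Set.indicator {p : ℝ × Esp n |
          ENNReal.ofReal p.1 < ρ p.2} 1 (l, x) * Qf n D F x := by
    intro l
    rw [setLIntegral_indicator_kernel volume (meas_Urho hρm _) (Qf n D F)]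
    apply lintegral_congr
    intro x
    by_cases h1 : ENNReal.ofReal l < ρ x <;>
      simp [Set.indicator_apply, Urho, h1]
  rw [show (fun l : ℝ => ∫⁻ x in Urho ρ (ENNReal.ofReal l), Qf n D F x) = _ from funext h]
  have hset : MeasurableSet {p : ℝ × Esp n | ENNReal.ofReal p.1 < ρ p.2} :=
    measurableSet_lt (ENNReal.measurable_ofReal.comp measurable_fst) (hρm.comp measurable_snd)
  exact Measurable.lintegral_prod_right'
    (f := fun p : ℝ × Esp n => Set.indicator {p : ℝ × Esp n |
      ENNReal.ofReal p.1 < ρ p.2} 1 p * Qf n D F p.2)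
    ((measurable_one.indicator hset).mul ((meas_Qf hDc F).comp measurable_snd))

lemma key_swap2 {D : Set (Esp n)} (hDc : D.Countable) (F : Zsp n → ℂ)
    {ρ : Esp n → ℝ≥0∞} (hρm : Measurable ρ) :
    ∫⁻ l in Set.Ioi (0:ℝ), ∫⁻ x in Urho ρ (ENNReal.ofReal l), Qf n D F x
      = ∫⁻ x, Qf n D F x * ρ x := by
  set S'' : Set (ℝ × Esp n) := {p | ENNReal.ofReal p.1 < ρ p.2} with hS''
  have hS''m : MeasurableSet S'' :=
    measurableSet_lt (ENNReal.measurable_ofReal.comp measurable_fst) (hρm.comp measurable_snd)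
  have step1 : ∫⁻ l in Set.Ioi (0:ℝ), ∫⁻ x in Urho ρ (ENNReal.ofReal l), Qf n D F x
      = ∫⁻ l in Set.Ioi (0:ℝ), (1:ℝ≥0∞) * ∫⁻ x, S''.indicator 1 (l, x) * Qf n D F x := by
    apply lintegral_congr
    intro l
    rw [one_mul, setLIntegral_indicator_kernel volume (meas_Urho hρm _) (Qf n D F)]
    apply lintegral_congr
    intro x
    by_cases h1 : ENNReal.ofReal l < ρ x <;>
      simp [Set.indicator_apply, Urho, hS'', h1]
  rw [step1]
  have hswap : ∫⁻ l in Set.Ioi (0:ℝ), (1:ℝ≥0∞) * ∫⁻ x, S''.indicator 1 (l, x) * Qf n D F x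
      = ∫⁻ x, Qf n D F x * ∫⁻ l in Set.Ioi (0:ℝ), S''.indicator 1 (l, x) * 1 :=
    swap_kernel (volume.restrict (Set.Ioi (0:ℝ))) volume
      (f := fun _ : ℝ => (1:ℝ≥0∞)) (g := Qf n D F) measurable_const (meas_Qf hDc F) hS''m
  rw [hswap]
  apply lintegral_congr
  intro x
  congr 1
  -- inner : ∫⁻ l in Ioi 0, S''.ind 1 (l,x) * 1 = ρ x
  calc ∫⁻ l in Set.Ioi (0:ℝ), S''.indicator 1 (l, x) * 1
      = ∫⁻ l, (Set.Ioi (0:ℝ)).indicator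
          ({l : ℝ | ENNReal.ofReal l < ρ x}.indicator 1) l := by
        rw [lintegral_indicator measurableSet_Ioi]
        apply lintegral_congr
        intro l
        rw [mul_one]
        by_cases h1 : ENNReal.ofReal l < ρ x <;>
          simp [Set.indicator_apply, hS'', h1]
    _ = ∫⁻ l, ({l : ℝ | 0 < l ∧ ENNReal.ofReal l < ρ x}).indicator 1 l := by
        apply lintegral_congr
        intro l
        by_cases h1 : 0 < l <;> by_cases h2 : ENNReal.ofReal l < ρ x <;>
          simp [Set.indicator_apply, h1, h2]
    _ = volume {l : ℝ | 0 < l ∧ ENNReal.ofReal l < ρ x} := by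
        apply lintegral_indicator_one
        rw [Set.setOf_and]
        exact measurableSet_Ioi.inter
          (measurableSet_lt ENNReal.measurable_ofReal measurable_const)
    _ = ρ x := layercake _

end CarlDualAux

open CarlDualAux

/-- **Duality estimate:** `∫ |F||G| ≤ C ∫ 𝒞₂(F)(x) S(G)(x) dx`; consequently
`T^{∞,2}` embeds in the dual of `T^{1,2}`. -/
theorem carleson_square_duality (n : ℕ) (hn : 1 ≤ n) :
    ∃ C : ℝ, 0 < C ∧
      ∀ (F G : ℝ × EuclideanSpace ℝ (Fin n) → ℂ), Measurable F → Measurable G →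
        (∫⁻ z in {z : ℝ × EuclideanSpace ℝ (Fin n) | 0 < z.1},
            ENNReal.ofReal (‖F z‖ * ‖G z‖))
          ≤ ENNReal.ofReal C * ∫⁻ x, carl2 n F x * sqFn n G x := by
  classical
  obtain ⟨D, hDc, hDd⟩ := TopologicalSpace.exists_countable_dense (Esp n)
  have hvpos : (0:ℝ) < (vball n).toReal :=
    ENNReal.toReal_pos (vball_pos hn).ne' vball_ne_top
  refine ⟨(32:ℝ)^n + ((vball n).toReal)⁻¹, by positivity, ?_⟩
  intro F G hF hG
  set ρ := rho n D F G with hρdef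
  have hρm : Measurable ρ := meas_rho hDc hG
  set T : Set (Zsp n) := {z | 0 < z.1} with hTdef
  set R := ∫⁻ x, carl2 n F x * sqFn n G x with hR
  -- Step 1 : pointwise AM-GM
  have step1 : (∫⁻ z in T, ENNReal.ofReal (‖F z‖ * ‖G z‖))
      ≤ 2⁻¹ * ((∫⁻ z in T, phiF F z * mfun n ρ z)
          + ∫⁻ z in T, phiF G z * (mfun n ρ z)⁻¹) := by
    have hmm := meas_mfun (n := n) hρm
    calc (∫⁻ z in T, ENNReal.ofReal (‖F z‖ * ‖G z‖))
        ≤ ∫⁻ z in T, 2⁻¹ * (phiF F z * mfun n ρ z + phiF G z * (mfun n ρ z)⁻¹) :=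
          lintegral_mono (fun z => amgm (norm_nonneg _) (norm_nonneg _) (mfun n ρ z))
      _ = 2⁻¹ * ∫⁻ z in T, (phiF F z * mfun n ρ z + phiF G z * (mfun n ρ z)⁻¹) :=
          lintegral_const_mul _ (((meas_phiF hF).mul hmm).add ((meas_phiF hG).mul hmm.inv))
      _ = 2⁻¹ * ((∫⁻ z in T, phiF F z * mfun n ρ z)
            + ∫⁻ z in T, phiF G z * (mfun n ρ z)⁻¹) := by
          rw [lintegral_add_left (f := fun z => phiF F z * mfun n ρ z) ((meas_phiF hF).mul hmm)]
  -- Step 2 : the F side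
  have stepF : (∫⁻ z in T, phiF F z * mfun n ρ z)
      ≤ (2 * ENNReal.ofReal ((32:ℝ)^n)) * ∫⁻ x, Qf n D F x * ρ x := by
    set S' : Set (Zsp n × ℝ) := Prod.swap ⁻¹' (mA n ρ) with hS'
    have hS'm : MeasurableSet S' := (meas_mA hρm).preimage measurable_swap
    have hglue : ∀ z, mfun n ρ z = ∫⁻ l, S'.indicator 1 (z, l) * 1 := by
      intro z
      rw [mfun]
      apply lintegral_congr
      intro l
      rw [mul_one]
      by_cases hl : (l, z) ∈ mA n ρ
      · rw [Set.indicator_of_mem hl, Set.indicator_of_mem (show (z,l) ∈ S' from hl)]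
        rfl
      · rw [Set.indicator_of_notMem hl, Set.indicator_of_notMem (show (z,l) ∉ S' from hl)]
    calc ∫⁻ z in T, phiF F z * mfun n ρ z
        = ∫⁻ z in T, phiF F z * ∫⁻ l, S'.indicator 1 (z, l) * 1 := by
          apply lintegral_congr
          intro z
          rw [hglue]
      _ = ∫⁻ l, (1:ℝ≥0∞) * ∫⁻ z in T, S'.indicator 1 (z, l) * phiF F z :=
          swap_kernel (volume.restrict T) volume
            (g := fun _ : ℝ => (1:ℝ≥0∞)) (meas_phiF hF) measurable_const hS'm
      _ ≤ ∫⁻ l, (Set.Ioi (0:ℝ)).indicator (fun l => 2 * ENNReal.ofReal ((32:ℝ)^n)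
            * ∫⁻ x in Urho ρ (ENNReal.ofReal l), Qf n D F x) l := by
          apply lintegral_mono
          intro l
          simp only [one_mul]
          by_cases hl : 0 < l
          · rw [Set.indicator_of_mem (Set.mem_Ioi.mpr hl)]
            have hpt2 : ∀ z : Zsp n, S'.indicator 1 (z, l) * phiF F z
                = (RU n (Urho ρ (ENNReal.ofReal l))).indicator (phiF F) z := by
              intro z
              by_cases hz : z ∈ RU n (Urho ρ (ENNReal.ofReal l))
              · rw [Set.indicator_of_mem hz,
                  Set.indicator_of_mem (show (z,l) ∈ S' from ⟨hl, hz⟩)]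
                simp
              · rw [Set.indicator_of_notMem hz,
                  Set.indicator_of_notMem (show (z,l) ∉ S' from fun hc => hz hc.2), zero_mul]
            calc ∫⁻ z in T, S'.indicator 1 (z, l) * phiF F z
                ≤ ∫⁻ z, S'.indicator 1 (z, l) * phiF F z := setLIntegral_le_lintegral _ _
              _ = ∫⁻ z, (RU n (Urho ρ (ENNReal.ofReal l))).indicator (phiF F) z :=
                  lintegral_congr hpt2
              _ = ∫⁻ z in RU n (Urho ρ (ENNReal.ofReal l)), phiF F z :=
                  lintegral_indicator (meas_RU (meas_Urho hρm _)) _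
              _ ≤ 2 * ENNReal.ofReal ((32:ℝ)^n)
                    * ∫⁻ x in Urho ρ (ENNReal.ofReal l), Qf n D F x :=
                  claim hn hDc hDd hF (meas_Urho hρm _)
          · rw [Set.indicator_of_notMem (by simpa using hl)]
            have hz0 : ∀ z : Zsp n, S'.indicator 1 (z, l) * phiF F z = 0 := by
              intro z
              rw [Set.indicator_of_notMem (show (z,l) ∉ S' from fun hc => hl hc.1), zero_mul]
            exact le_of_eq (by rw [lintegral_congr hz0, lintegral_zero])
      _ = ∫⁻ l in Set.Ioi (0:ℝ), 2 * ENNReal.ofReal ((32:ℝ)^n)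
            * ∫⁻ x in Urho ρ (ENNReal.ofReal l), Qf n D F x :=
          lintegral_indicator measurableSet_Ioi _
      _ = 2 * ENNReal.ofReal ((32:ℝ)^n)
            * ∫⁻ l in Set.Ioi (0:ℝ), ∫⁻ x in Urho ρ (ENNReal.ofReal l), Qf n D F x :=
          lintegral_const_mul _ (meas_lQ hDc F hρm)
      _ = (2 * ENNReal.ofReal ((32:ℝ)^n)) * ∫⁻ x, Qf n D F x * ρ x := by
          rw [key_swap2 hDc F hρm]
  -- Step 3 : the G side
  have stepG : (∫⁻ z in T, phiF G z * (mfun n ρ z)⁻¹)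
      ≤ (2 * (vball n)⁻¹) * ∫⁻ x, (ρ x)⁻¹ * Ssq n G x := by
    set O : Set (Zsp n × Esp n) := {p | dist p.2 p.1.2 < Real.sqrt p.1.1} with hO
    have h1 : Continuous fun p : Zsp n × Esp n => dist p.2 p.1.2 :=
      continuous_snd.dist continuous_fst.snd
    have h2 : Continuous fun p : Zsp n × Esp n => Real.sqrt p.1.1 :=
      Real.continuous_sqrt.comp continuous_fst.fst
    have hOm : MeasurableSet O := measurableSet_lt h1.measurable h2.measurable
    have hfm : Measurable fun z : Zsp n =>
        phiF G z * (volume (ball z.2 (Real.sqrt z.1)))⁻¹ :=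
      (meas_phiF hG).mul meas_volBall.inv
    have hpt : ∀ z ∈ T, phiF G z * (mfun n ρ z)⁻¹
        ≤ 2 * ((phiF G z * (volume (ball z.2 (Real.sqrt z.1)))⁻¹)
            * ∫⁻ x in ball z.2 (Real.sqrt z.1), (ρ x)⁻¹) := by
      intro z hz
      have hzpos : 0 < z.1 := hz
      have hkey := minv_le hρm (z := z) hzpos
      have hvne : volume (ball z.2 (Real.sqrt z.1)) ≠ ∞ := measure_ball_lt_top.ne
      have hvpos' : volume (ball z.2 (Real.sqrt z.1)) ≠ 0 :=
        (measure_ball_pos volume _ (Real.sqrt_pos.mpr hzpos)).ne'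
      have hone : (volume (ball z.2 (Real.sqrt z.1)) / 2)
          * (2 * (volume (ball z.2 (Real.sqrt z.1)))⁻¹) = 1 := by
        rw [div_eq_mul_inv]
        calc volume (ball z.2 (Real.sqrt z.1)) * 2⁻¹
              * (2 * (volume (ball z.2 (Real.sqrt z.1)))⁻¹)
            = (volume (ball z.2 (Real.sqrt z.1)) * (volume (ball z.2 (Real.sqrt z.1)))⁻¹)
              * (2⁻¹ * 2) := by ring
          _ = 1 := by
              rw [ENNReal.mul_inv_cancel hvpos' hvne,
                ENNReal.inv_mul_cancel two_ne_zero ENNReal.ofNat_ne_top, mul_one]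
      have hminv : (mfun n ρ z)⁻¹
          ≤ (∫⁻ x in ball z.2 (Real.sqrt z.1), (ρ x)⁻¹)
            * (2 * (volume (ball z.2 (Real.sqrt z.1)))⁻¹) := by
        calc (mfun n ρ z)⁻¹
            = ((mfun n ρ z)⁻¹ * (volume (ball z.2 (Real.sqrt z.1)) / 2))
              * (2 * (volume (ball z.2 (Real.sqrt z.1)))⁻¹) := by
              rw [mul_assoc, hone, mul_one]
          _ ≤ (∫⁻ x in ball z.2 (Real.sqrt z.1), (ρ x)⁻¹)
              * (2 * (volume (ball z.2 (Real.sqrt z.1)))⁻¹) :=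
              mul_le_mul_left hkey _
      calc phiF G z * (mfun n ρ z)⁻¹
          ≤ phiF G z * ((∫⁻ x in ball z.2 (Real.sqrt z.1), (ρ x)⁻¹)
              * (2 * (volume (ball z.2 (Real.sqrt z.1)))⁻¹)) := mul_le_mul_right hminv _
        _ = 2 * ((phiF G z * (volume (ball z.2 (Real.sqrt z.1)))⁻¹)
              * ∫⁻ x in ball z.2 (Real.sqrt z.1), (ρ x)⁻¹) := by ring
    have hglue2 : ∀ z : Zsp n, ∫⁻ x in ball z.2 (Real.sqrt z.1), (ρ x)⁻¹
        = ∫⁻ x, O.indicator 1 (z, x) * (ρ x)⁻¹ := by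
      intro z
      rw [setLIntegral_indicator_kernel volume measurableSet_ball]
      apply lintegral_congr
      intro x
      by_cases hx : dist x z.2 < Real.sqrt z.1 <;>
        simp [Set.indicator_apply, mem_ball, hO, hx]
    have hglue3 : ∀ x : Esp n, ∫⁻ z, O.indicator 1 (z, x)
          * (phiF G z * (volume (ball z.2 (Real.sqrt z.1)))⁻¹)
        = (vball n)⁻¹ * Ssq n G x := by
      intro x
      rw [← cone_eval hn hG x, setLIntegral_indicator_kernel volume (measurable_coneSet x)]
      apply lintegral_congr
      intro z
      by_cases hz : dist z.2 x < Real.sqrt z.1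
      · rw [Set.indicator_of_mem (show z ∈ coneSet n x from hz),
          Set.indicator_of_mem (show (z,x) ∈ O from by
            simp only [hO, Set.mem_setOf_eq]
            rwa [dist_comm])]
        rfl
      · rw [Set.indicator_of_notMem (show z ∉ coneSet n x from hz),
          Set.indicator_of_notMem (show (z,x) ∉ O from by
            simp only [hO, Set.mem_setOf_eq]
            rwa [dist_comm])]
    calc ∫⁻ z in T, phiF G z * (mfun n ρ z)⁻¹
        ≤ ∫⁻ z in T, 2 * ((phiF G z * (volume (ball z.2 (Real.sqrt z.1)))⁻¹)
            * ∫⁻ x in ball z.2 (Real.sqrt z.1), (ρ x)⁻¹) :=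
          setLIntegral_mono ((hfm.mul (meas_ballLIntegral hρm.inv)).const_mul 2) hpt
      _ ≤ ∫⁻ z, 2 * ((phiF G z * (volume (ball z.2 (Real.sqrt z.1)))⁻¹)
            * ∫⁻ x in ball z.2 (Real.sqrt z.1), (ρ x)⁻¹) := setLIntegral_le_lintegral _ _
      _ = ∫⁻ z, 2 * ((phiF G z * (volume (ball z.2 (Real.sqrt z.1)))⁻¹)
            * ∫⁻ x, O.indicator 1 (z, x) * (ρ x)⁻¹) := by
          apply lintegral_congr
          intro z
          rw [hglue2]
      _ = 2 * ∫⁻ z, (phiF G z * (volume (ball z.2 (Real.sqrt z.1)))⁻¹)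
            * ∫⁻ x, O.indicator 1 (z, x) * (ρ x)⁻¹ := by
          apply lintegral_const_mul
          exact hfm.mul (Measurable.lintegral_prod_right'
            (f := fun p : Zsp n × Esp n => O.indicator 1 p * (ρ p.2)⁻¹)
            ((measurable_one.indicator hOm).mul (hρm.inv.comp measurable_snd)))
      _ = 2 * ∫⁻ x, (ρ x)⁻¹ * ∫⁻ z, O.indicator 1 (z, x)
            * (phiF G z * (volume (ball z.2 (Real.sqrt z.1)))⁻¹) := by
          rw [swap_kernel volume volume (g := fun x => (ρ x)⁻¹) hfm hρm.inv hOm]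
      _ = 2 * ∫⁻ x, (ρ x)⁻¹ * ((vball n)⁻¹ * Ssq n G x) := by
          congr 1
          apply lintegral_congr
          intro x
          rw [hglue3]
      _ = (2 * (vball n)⁻¹) * ∫⁻ x, (ρ x)⁻¹ * Ssq n G x := by
          rw [mul_assoc, ← lintegral_const_mul ((vball n)⁻¹) (f := fun x => (ρ x)⁻¹ * Ssq n G x) (hρm.inv.mul (meas_Ssq hG))]
          congr 1
          apply lintegral_congr
          intro x
          ring
  -- Step 4 : pointwise domination by carl2 * sqFn
  have hcarl : ∀ x, (Qf n D F x) ^ (1/2:ℝ) ≤ carl2 n F x := by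
    intro x
    rw [carl2_eq]
    exact ENNReal.rpow_le_rpow (Qf_le_carlSup D F x) (by norm_num)
  have hQρ : ∀ x, Qf n D F x * ρ x ≤ carl2 n F x * sqFn n G x := by
    intro x
    refine le_trans (ratio1 (Qf n D F x) (sqFn n G x)) ?_
    exact mul_le_mul_left (hcarl x) _
  have hρinv : ∀ x, (ρ x)⁻¹ * Ssq n G x ≤ carl2 n F x * sqFn n G x := by
    intro x
    have h0 : Ssq n G x = sqFn n G x * sqFn n G x := by
      rw [sqFn_eq, sqhalf]
    rw [h0]
    refine le_trans (ratio2 ((Qf n D F x) ^ (1/2:ℝ)) (sqFn n G x)) ?_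
    exact mul_le_mul_left (hcarl x) _
  -- assemble
  calc (∫⁻ z in T, ENNReal.ofReal (‖F z‖ * ‖G z‖))
      ≤ 2⁻¹ * ((∫⁻ z in T, phiF F z * mfun n ρ z)
          + ∫⁻ z in T, phiF G z * (mfun n ρ z)⁻¹) := step1
    _ ≤ 2⁻¹ * (((2 * ENNReal.ofReal ((32:ℝ)^n)) * ∫⁻ x, Qf n D F x * ρ x)
          + ((2 * (vball n)⁻¹) * ∫⁻ x, (ρ x)⁻¹ * Ssq n G x)) :=
        mul_le_mul_right (add_le_add stepF stepG) _
    _ ≤ 2⁻¹ * ((2 * ENNReal.ofReal ((32:ℝ)^n)) * R + (2 * (vball n)⁻¹) * R) := by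
        apply mul_le_mul_right
        exact add_le_add (mul_le_mul_right (lintegral_mono hQρ) _)
          (mul_le_mul_right (lintegral_mono hρinv) _)
    _ = (ENNReal.ofReal ((32:ℝ)^n) + (vball n)⁻¹) * R := by
        have h2 : (2:ℝ≥0∞)⁻¹ * 2 = 1 :=
          ENNReal.inv_mul_cancel two_ne_zero ENNReal.ofNat_ne_top
        calc 2⁻¹ * ((2 * ENNReal.ofReal ((32:ℝ)^n)) * R + (2 * (vball n)⁻¹) * R)
            = (2⁻¹ * 2) * ((ENNReal.ofReal ((32:ℝ)^n) + (vball n)⁻¹) * R) := by ring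
          _ = (ENNReal.ofReal ((32:ℝ)^n) + (vball n)⁻¹) * R := by rw [h2, one_mul]
    _ ≤ ENNReal.ofReal ((32:ℝ)^n + ((vball n).toReal)⁻¹) * R := by
        apply mul_le_mul_left
        have hv : (vball n)⁻¹ = ENNReal.ofReal (((vball n).toReal)⁻¹) := by
          rw [ENNReal.ofReal_inv_of_pos hvpos, ENNReal.ofReal_toReal vball_ne_top]
        rw [ENNReal.ofReal_add (by positivity) (by positivity), hv]
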